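/- For every edge-coloring of a complete graph, the set S = { n − 2 : n ≥ 3 and the coloring contains no rainbow n-cycle } ∪ {0} is closed under addition, i.e. the set of integers s ≥ 1 such that the coloring contains no rainbow (s+2)-cycle, together with 0, forms a submonoid of ℕ under addition. -/
import Mathlib

/-- A rainbow cycle: `n` pairwise distinct vertices (given as an injective map
`v : Fin n → V`) such that the `n` edge colors `col (v i) (v (i+1))`
(indices cyclic mod `n`) are pairwise distinct. -/
def IsRainbowCycle {V C : Type*} {n : ℕ} (col : V → V → C) (v : Fin n → V) : Prop :=
  Function.Injective v ∧
    Function.Injective (fun i : Fin n =>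
      col (v i) (v ⟨(i.val + 1) % n, Nat.mod_lt _ i.pos⟩))

/-- An edge-coloring `col` contains a rainbow `n`-cycle. -/
def ContainsRainbowCycle {V C : Type*} (col : V → V → C) (n : ℕ) : Prop :=
  ∃ v : Fin n → V, IsRainbowCycle col v

theorem rainbow_key {V C : Type*} (col : V → V → C)
    (hsym : ∀ x y, col x y = col y x) (n s t : ℕ) (hn : n = s + t + 2)
    (hs : 1 ≤ s) (ht : 1 ≤ t)
    (hns : ¬ ContainsRainbowCycle col (s + 2))
    (hnt : ¬ ContainsRainbowCycle col (t + 2)) :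
    ¬ ContainsRainbowCycle col n := by
  rintro ⟨v, hvinj, heinj⟩
  have hc0 : 0 < n := by omega
  have hcs : s + 1 < n := by omega
  have vcongr : ∀ {x y : ℕ} (hx : x < n) (hy : y < n), x = y → v ⟨x, hx⟩ = v ⟨y, hy⟩ := by
    intro x y hx hy h; subst h; rfl
  by_cases hcase : ∃ i : Fin n, i.val ≤ s ∧
      col (v i) (v ⟨(i.val + 1) % n, Nat.mod_lt _ i.pos⟩)
        = col (v ⟨0, hc0⟩) (v ⟨s + 1, hcs⟩)
  · -- chord color clashes on the left arc: the right (t+2)-cycle is rainbow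
    obtain ⟨i₀, hi₀, hEi₀⟩ := hcase
    have hCne : ∀ j : Fin n, s + 1 ≤ j.val →
        col (v j) (v ⟨(j.val + 1) % n, Nat.mod_lt _ j.pos⟩)
          ≠ col (v ⟨0, hc0⟩) (v ⟨s + 1, hcs⟩) := by
      intro j hj hEj
      have h1 := heinj (hEi₀.trans hEj.symm)
      have h2 := congrArg Fin.val h1
      omega
    apply hnt
    refine ⟨fun i : Fin (t + 2) =>
      v ⟨(s + 1 + i.val) % n, Nat.mod_lt _ hc0⟩, ?_, ?_⟩
    · intro i j h
      have h' := congrArg Fin.val (hvinj h)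
      simp only at h'
      have hi := i.isLt; have hj := j.isLt
      have mi : (s + 1 + i.val) % n = if i.val = t + 1 then 0 else s + 1 + i.val := by
        rcases Nat.lt_or_ge i.val (t + 1) with h1 | h1
        · rw [if_neg (by omega), Nat.mod_eq_of_lt (by omega)]
        · have hit : i.val = t + 1 := by omega
          rw [if_pos hit, hit, show s + 1 + (t + 1) = n by omega, Nat.mod_self]
      have mj : (s + 1 + j.val) % n = if j.val = t + 1 then 0 else s + 1 + j.val := by
        rcases Nat.lt_or_ge j.val (t + 1) with h1 | h1
        · rw [if_neg (by omega), Nat.mod_eq_of_lt (by omega)]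
        · have hjt : j.val = t + 1 := by omega
          rw [if_pos hjt, hjt, show s + 1 + (t + 1) = n by omega, Nat.mod_self]
      rw [mi, mj] at h'
      apply Fin.ext
      split_ifs at h' <;> omega
    · have fval : ∀ (i : Fin (t + 2)) (hi : i.val ≤ t),
          col (v ⟨(s + 1 + i.val) % n, Nat.mod_lt _ hc0⟩)
              (v ⟨(s + 1 + ((i.val + 1) % (t + 2))) % n, Nat.mod_lt _ hc0⟩)
          = col (v ⟨s + 1 + i.val, by omega⟩)
              (v ⟨(s + 1 + i.val + 1) % n, Nat.mod_lt _ hc0⟩) := by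
        intro i hi
        refine congrArg₂ col (vcongr _ _ ?_) (vcongr _ _ ?_)
        · exact Nat.mod_eq_of_lt (by omega)
        · rw [Nat.mod_eq_of_lt (show i.val + 1 < t + 2 by omega), ← Nat.add_assoc]
      have flast : ∀ (i : Fin (t + 2)), i.val = t + 1 →
          col (v ⟨(s + 1 + i.val) % n, Nat.mod_lt _ hc0⟩)
              (v ⟨(s + 1 + ((i.val + 1) % (t + 2))) % n, Nat.mod_lt _ hc0⟩)
          = col (v ⟨0, hc0⟩) (v ⟨s + 1, hcs⟩) := by
        intro i hi
        refine congrArg₂ col (vcongr _ _ ?_) (vcongr _ _ ?_)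
        · rw [hi, show s + 1 + (t + 1) = n by omega, Nat.mod_self]
        · rw [hi, show t + 1 + 1 = t + 2 from rfl, Nat.mod_self]
          exact Nat.mod_eq_of_lt (by omega)
      intro i j h
      rcases Nat.lt_or_ge i.val (t + 1) with h1 | h1 <;>
        rcases Nat.lt_or_ge j.val (t + 1) with h2 | h2
      · have h3 := (fval i (by omega)).symm.trans (h.trans (fval j (by omega)))
        have h4 := congrArg Fin.val (heinj h3)
        apply Fin.ext; simp only at h4; omega
      · have hj : j.val = t + 1 := by have := j.isLt; omega
        have h3 := (fval i (by omega)).symm.trans (h.trans (flast j hj))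
        exact absurd h3 (hCne ⟨s + 1 + i.val, by omega⟩ (Nat.le_add_right _ _))
      · have hi : i.val = t + 1 := by have := i.isLt; omega
        have h3 := (fval j (by omega)).symm.trans (h.symm.trans (flast i hi))
        exact absurd h3 (hCne ⟨s + 1 + j.val, by omega⟩ (Nat.le_add_right _ _))
      · apply Fin.ext; have := i.isLt; have := j.isLt; omega
  · -- no clash on the left arc: the left (s+2)-cycle is rainbow
    push_neg at hcase
    apply hns
    refine ⟨fun i : Fin (s + 2) =>
      v ⟨i.val, lt_of_lt_of_le i.isLt (by omega)⟩, ?_, ?_⟩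
    · intro i j h
      have h' := congrArg Fin.val (hvinj h)
      simp only at h'
      exact Fin.ext h'
    · have fval : ∀ (i : Fin (s + 2)) (hi : i.val ≤ s),
          col (v ⟨i.val, lt_of_lt_of_le i.isLt (by omega)⟩)
              (v ⟨(i.val + 1) % (s + 2), by
                exact lt_of_lt_of_le (Nat.mod_lt _ (by omega)) (by omega)⟩)
          = col (v ⟨i.val, lt_of_lt_of_le i.isLt (by omega)⟩)
              (v ⟨(i.val + 1) % n, Nat.mod_lt _ hc0⟩) := by
        intro i hi
        refine congrArg₂ col rfl (vcongr _ _ ?_)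
        rw [Nat.mod_eq_of_lt (show i.val + 1 < s + 2 by omega),
            Nat.mod_eq_of_lt (show i.val + 1 < n by omega)]
      have flast : ∀ (i : Fin (s + 2)), i.val = s + 1 →
          col (v ⟨i.val, lt_of_lt_of_le i.isLt (by omega)⟩)
              (v ⟨(i.val + 1) % (s + 2), by
                exact lt_of_lt_of_le (Nat.mod_lt _ (by omega)) (by omega)⟩)
          = col (v ⟨0, hc0⟩) (v ⟨s + 1, hcs⟩) := by
        intro i hi
        rw [hsym]
        refine congrArg₂ col (vcongr _ _ ?_) (vcongr _ _ hi)
        rw [hi, show s + 1 + 1 = s + 2 from rfl, Nat.mod_self]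
      intro i j h
      rcases Nat.lt_or_ge i.val (s + 1) with h1 | h1 <;>
        rcases Nat.lt_or_ge j.val (s + 1) with h2 | h2
      · have h3 := (fval i (by omega)).symm.trans (h.trans (fval j (by omega)))
        have h4 := congrArg Fin.val (heinj h3)
        apply Fin.ext; simp only at h4; omega
      · have hj : j.val = s + 1 := by have := j.isLt; omega
        have h3 := (fval i (by omega)).symm.trans (h.trans (flast j hj))
        exact absurd h3 (hcase ⟨i.val, by have := i.isLt; omega⟩ (show i.val ≤ s by omega))
      · have hi : i.val = s + 1 := by have := i.isLt; omega
        have h3 := (fval j (by omega)).symm.trans (h.symm.trans (flast i hi))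
        exact absurd h3 (hcase ⟨j.val, by have := j.isLt; omega⟩ (show j.val ≤ s by omega))
      · apply Fin.ext; have := i.isLt; have := j.isLt; omega

/-- For any symmetric edge-coloring, the set
`{ n - 2 : n ≥ 3, no rainbow n-cycle } ∪ {0}` — i.e. the `s ≥ 1` with no rainbow
`(s+2)`-cycle, together with `0` — is closed under addition (a submonoid of `ℕ`). -/
theorem spectrum_addClosed {V C : Type*} (col : V → V → C)
    (hsym : ∀ x y, col x y = col y x) :
    ∀ s t : ℕ,
      s ∈ ({0} ∪ {s : ℕ | 1 ≤ s ∧ ¬ ContainsRainbowCycle col (s + 2)} : Set ℕ) →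
      t ∈ ({0} ∪ {s : ℕ | 1 ≤ s ∧ ¬ ContainsRainbowCycle col (s + 2)} : Set ℕ) →
      s + t ∈ ({0} ∪ {s : ℕ | 1 ≤ s ∧ ¬ ContainsRainbowCycle col (s + 2)} : Set ℕ) := by
  intro s t hsm htm
  rcases hsm with hs0 | ⟨hs1, hsC⟩
  · simp only [Set.mem_singleton_iff] at hs0
    subst hs0
    simpa using htm
  rcases htm with ht0 | ⟨ht1, htC⟩
  · simp only [Set.mem_singleton_iff] at ht0
    subst ht0
    right; exact ⟨by omega, by simpa using hsC⟩
  · right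
    exact ⟨by omega, rainbow_key col hsym (s + t + 2) s t rfl hs1 ht1 hsC htC⟩
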